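/- Let σ ≥ −1, T > 0 and let A, B : [0,T] × ℝ² → ℂ be measurable with sup_{0≤t≤T} ‖A(t)‖_{X⁰}, sup_{0≤t≤T} ‖B(t)‖_{X⁰}, ∫₀^T ‖A(t)‖_{X^{σ+1}} dt and ∫₀^T ‖B(t)‖_{X^{σ+1}} dt all finite. Define Q(t,ξ) := ∫₀^t e^{−(t−z)|ξ|} N[A,B](z,ξ) dz. Then ∫₀^T ∫_{ℝ²} |ξ|^{σ+1} |Q(t,ξ)| dξ dt ≤ 2^{σ+1} [ (sup_{0≤t≤T} ‖A(t)‖_{X⁰}) ∫₀^T ‖B(t)‖_{X^{σ+1}} dt + (∫₀^T ‖A(t)‖_{X^{σ+1}} dt)(sup_{0≤t≤T} ‖B(t)‖_{X⁰}) ]. -/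

import Mathlib

open MeasureTheory Filter
open scoped ENNReal NNReal

noncomputable section

abbrev E2 : Type := EuclideanSpace ℝ (Fin 2)

/-- `X^σ`-type norm of a time slice: `∫ |ξ|^σ |Θ(t,ξ)| dξ` (valued in `ℝ≥0∞`). -/
def Xnorm (σ : ℝ) (g : E2 → ℂ) : ℝ≥0∞ :=
  ∫⁻ ξ : E2, ENNReal.ofReal (‖ξ‖ ^ σ) * ‖g ξ‖₊

/-- Bilinear quasi-geostrophic term `N[A,B]` on the Fourier side:
the Fourier transform of `-div(b u_a)`. -/
def QGB (A B : ℝ → E2 → ℂ) (z : ℝ) (ξ : E2) : ℂ :=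
  ∫ η : E2, (((ξ 0 * η 1 - ξ 1 * η 0) / ‖η‖ : ℝ) : ℂ) * A z η * B z (ξ - η)

namespace BDIB

def mk (ξ η : E2) : ℝ := (ξ 0 * η 1 - ξ 1 * η 0) / ‖η‖

lemma abs_cross_le (ξ η : E2) : |ξ 0 * η 1 - ξ 1 * η 0| ≤ ‖ξ‖ * ‖η‖ := by
  have hξ : ‖ξ‖ = Real.sqrt (ξ 0 ^ 2 + ξ 1 ^ 2) := by
    rw [EuclideanSpace.norm_eq]; simp [Fin.sum_univ_two, Real.norm_eq_abs, sq_abs]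
  have hη : ‖η‖ = Real.sqrt (η 0 ^ 2 + η 1 ^ 2) := by
    rw [EuclideanSpace.norm_eq]; simp [Fin.sum_univ_two, Real.norm_eq_abs, sq_abs]
  calc |ξ 0 * η 1 - ξ 1 * η 0| = Real.sqrt ((ξ 0 * η 1 - ξ 1 * η 0) ^ 2) :=
        (Real.sqrt_sq_eq_abs _).symm
    _ ≤ Real.sqrt ((ξ 0 ^ 2 + ξ 1 ^ 2) * (η 0 ^ 2 + η 1 ^ 2)) :=
        Real.sqrt_le_sqrt (by nlinarith [sq_nonneg (ξ 0 * η 0 + ξ 1 * η 1)])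
    _ = Real.sqrt (ξ 0 ^ 2 + ξ 1 ^ 2) * Real.sqrt (η 0 ^ 2 + η 1 ^ 2) :=
        Real.sqrt_mul (by positivity) _
    _ = ‖ξ‖ * ‖η‖ := by rw [hξ, hη]

lemma mk_abs_le (ξ η : E2) : |mk ξ η| ≤ ‖ξ‖ := by
  unfold mk
  rw [abs_div, abs_of_nonneg (norm_nonneg η)]
  rcases (norm_nonneg η).eq_or_lt with h | h
  · rw [← h, div_zero]; exact norm_nonneg ξ
  · rw [div_le_iff₀ h]; exact abs_cross_le ξ η

lemma key_real (σ : ℝ) (hσ : -1 ≤ σ) (ξ η : E2) :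
    ‖ξ‖ ^ (σ + 1) * |mk ξ η| ≤ 2 ^ (σ + 1) * (‖η‖ ^ (σ + 1) + ‖ξ - η‖ ^ (σ + 1)) * ‖ξ‖ := by
  have hs1 : (0:ℝ) ≤ σ + 1 := by linarith
  set a := ‖η‖ with ha
  set b := ‖ξ - η‖ with hb
  have ha0 : 0 ≤ a := norm_nonneg _
  have hb0 : 0 ≤ b := norm_nonneg _
  have hM : ‖ξ‖ ≤ 2 * max a b := by
    have h1 : ‖ξ‖ ≤ a + b := by
      have h2 : ‖ξ‖ = ‖η + (ξ - η)‖ := by rw [add_sub_cancel]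
      rw [h2]; exact norm_add_le _ _
    have h3 := le_max_left a b
    have h4 := le_max_right a b
    linarith
  have hMs : (max a b) ^ (σ + 1) ≤ a ^ (σ + 1) + b ^ (σ + 1) := by
    rcases max_cases a b with ⟨h1, _⟩ | ⟨h1, _⟩ <;> rw [h1]
    · linarith [Real.rpow_nonneg hb0 (σ + 1)]
    · linarith [Real.rpow_nonneg ha0 (σ + 1)]
  have hsuff : ‖ξ‖ ^ (σ + 1) * |mk ξ η| ≤ (2 * max a b) ^ (σ + 1) * ‖ξ‖ := by
    rcases (norm_nonneg ξ).eq_or_lt with hξ0 | hξ0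
    · have hm0 : |mk ξ η| ≤ 0 := by simpa [← hξ0] using mk_abs_le ξ η
      have hm0' : |mk ξ η| = 0 := le_antisymm hm0 (abs_nonneg _)
      rw [hm0', ← hξ0, mul_zero, mul_zero]
    · have hM0 : 0 < 2 * max a b := lt_of_lt_of_le hξ0 hM
      have hkey : ‖ξ‖ ^ σ * |mk ξ η| ≤ (2 * max a b) ^ (σ + 1) := by
        rcases le_or_gt 0 σ with hσ0 | hσ0
        · have p1 : ‖ξ‖ ^ σ * |mk ξ η| ≤ (2 * max a b) ^ σ * (2 * max a b) :=
            mul_le_mul (Real.rpow_le_rpow (norm_nonneg ξ) hM hσ0)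
              ((mk_abs_le ξ η).trans hM) (abs_nonneg _) (Real.rpow_nonneg hM0.le σ)
          rw [Real.rpow_add_one hM0.ne' σ]
          exact p1
        · have p1 : ‖ξ‖ ^ σ * |mk ξ η| ≤ ‖ξ‖ ^ σ * ‖ξ‖ :=
            mul_le_mul_of_nonneg_left (mk_abs_le ξ η) (Real.rpow_nonneg (norm_nonneg ξ) σ)
          have p2 : ‖ξ‖ ^ σ * ‖ξ‖ = ‖ξ‖ ^ (σ + 1) := (Real.rpow_add_one hξ0.ne' σ).symm
          have p3 : ‖ξ‖ ^ (σ + 1) ≤ (2 * max a b) ^ (σ + 1) :=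
            Real.rpow_le_rpow (norm_nonneg ξ) hM hs1
          linarith
      have p4 : ‖ξ‖ ^ (σ + 1) * |mk ξ η| = (‖ξ‖ ^ σ * |mk ξ η|) * ‖ξ‖ := by
        rw [Real.rpow_add_one hξ0.ne']; ring
      rw [p4]
      exact mul_le_mul_of_nonneg_right hkey (norm_nonneg ξ)
  have heq : (2 * max a b) ^ (σ + 1) = 2 ^ (σ + 1) * (max a b) ^ (σ + 1) :=
    Real.mul_rpow (by norm_num) (le_max_of_le_left ha0)
  have hfin : (2 * max a b) ^ (σ + 1) * ‖ξ‖ ≤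
      2 ^ (σ + 1) * (a ^ (σ + 1) + b ^ (σ + 1)) * ‖ξ‖ := by
    rw [heq]
    exact mul_le_mul_of_nonneg_right
      (mul_le_mul_of_nonneg_left hMs (Real.rpow_nonneg (by norm_num) _)) (norm_nonneg ξ)
  linarith

lemma exp_int_le (z c : ℝ) (hc : 0 ≤ c) :
    (∫⁻ t in Set.Ici z, ENNReal.ofReal (c * Real.exp (-((t - z) * c)))) ≤ 1 := by
  rcases hc.eq_or_lt with hc0 | hc0
  · simp [← hc0]
  set g : ℝ → ℝ≥0∞ := fun s => ENNReal.ofReal (c * Real.exp (-c * s)) with hg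
  have h1 : (∫⁻ t in Set.Ici z, ENNReal.ofReal (c * Real.exp (-((t - z) * c))))
      = ∫⁻ s in Set.Ici (0:ℝ), g s := by
    rw [← lintegral_indicator measurableSet_Ici, ← lintegral_indicator measurableSet_Ici]
    have hpt : ∀ t : ℝ, (Set.Ici z).indicator
        (fun t => ENNReal.ofReal (c * Real.exp (-((t - z) * c)))) t
        = ((Set.Ici (0:ℝ)).indicator g) (t + -z) := by
      intro t
      have harg : -((t - z) * c) = -c * (t + -z) := by ring
      simp only [Set.indicator_apply, Set.mem_Ici, hg, harg, ← sub_eq_add_neg, sub_nonneg]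
    rw [lintegral_congr hpt, lintegral_add_right_eq_self]
  rw [h1, ← MeasureTheory.restrict_Ioi_eq_restrict_Ici]
  have hint : IntegrableOn (fun s => c * Real.exp (-c * s)) (Set.Ioi (0:ℝ)) :=
    (exp_neg_integrableOn_Ioi 0 hc0).const_mul c
  have hpos : (0:ℝ → ℝ) ≤ᶠ[ae (volume.restrict (Set.Ioi (0:ℝ)))]
      fun s => c * Real.exp (-c * s) :=
    Filter.Eventually.of_forall fun s => by positivity
  have h2 : (∫⁻ s in Set.Ioi (0:ℝ), g s)
      = ENNReal.ofReal (∫ s in Set.Ioi (0:ℝ), c * Real.exp (-c * s)) :=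
    (ofReal_integral_eq_lintegral_ofReal hint hpos).symm
  rw [h2]
  have h3 : (∫ s in Set.Ioi (0:ℝ), c * Real.exp (-c * s))
      = c * ∫ s in Set.Ioi (0:ℝ), Real.exp (-(c * s)) := by
    rw [MeasureTheory.integral_const_mul]
    simp only [neg_mul]
  have h4 : (∫ s in Set.Ioi (0:ℝ), Real.exp (-(c * s))) = c⁻¹ := by
    have h5 := integral_comp_mul_left_Ioi (fun x => Real.exp (-x)) 0 hc0
    simp only [mul_zero, integral_exp_neg_Ioi, neg_zero, Real.exp_zero, smul_eq_mul,
      mul_one] at h5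
    exact h5
  rw [h3, h4, mul_inv_cancel₀ hc0.ne']
  simp


def EE (t z : ℝ) (ξ : E2) : ℝ≥0∞ :=
  ENNReal.ofReal (‖ξ‖ * Real.exp (-((t - z) * ‖ξ‖)))

def Gg (σ : ℝ) (A B : ℝ → E2 → ℂ) (z : ℝ) (ξ η : E2) : ℝ≥0∞ :=
  (ENNReal.ofReal (‖η‖ ^ (σ + 1)) + ENNReal.ofReal (‖ξ - η‖ ^ (σ + 1))) *
    ((‖A z η‖₊ : ℝ≥0∞) * (‖B z (ξ - η)‖₊ : ℝ≥0∞))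

def Kk (σ : ℝ) (A B : ℝ → E2 → ℂ) (z : ℝ) (ξ : E2) : ℝ≥0∞ :=
  ∫⁻ η, Gg σ A B z ξ η

lemma Kk_def (σ : ℝ) (A B : ℝ → E2 → ℂ) (z : ℝ) (ξ : E2) :
    Kk σ A B z ξ = ∫⁻ η, Gg σ A B z ξ η := rfl

def Hh (σ : ℝ) (A B : ℝ → E2 → ℂ) (t z : ℝ) (ξ : E2) : ℝ≥0∞ :=
  Set.indicator {q : ℝ × ℝ | 0 < q.2 ∧ q.2 ≤ q.1} 1 (t, z) *
    (EE t z ξ * ((2 : ℝ≥0∞) ^ (σ + 1) * Kk σ A B z ξ))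

variable {A B : ℝ → E2 → ℂ}

lemma meas_EE : Measurable fun p : (ℝ × ℝ) × E2 => EE p.1.1 p.1.2 p.2 := by
  unfold EE; fun_prop

lemma meas_Gg (σ : ℝ) (hA : Measurable (Function.uncurry A))
    (hB : Measurable (Function.uncurry B)) :
    Measurable (fun p : (ℝ × E2) × E2 => Gg σ A B p.1.1 p.1.2 p.2) := by
  have h1 : Measurable fun p : (ℝ × E2) × E2 => ((‖A p.1.1 p.2‖₊ : ℝ≥0∞)) := by
    exact (hA.comp (by fun_prop : Measurable fun p : (ℝ × E2) × E2 => (p.1.1, p.2))).nnnorm.coe_nnreal_ennreal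
  have h2 : Measurable fun p : (ℝ × E2) × E2 => ((‖B p.1.1 (p.1.2 - p.2)‖₊ : ℝ≥0∞)) := by
    exact (hB.comp (by fun_prop :
      Measurable fun p : (ℝ × E2) × E2 => (p.1.1, p.1.2 - p.2))).nnnorm.coe_nnreal_ennreal
  have h3 : Measurable fun p : (ℝ × E2) × E2 =>
      (ENNReal.ofReal (‖p.2‖ ^ (σ + 1)) + ENNReal.ofReal (‖p.1.2 - p.2‖ ^ (σ + 1))) := by
    fun_prop
  exact h3.mul (h1.mul h2)

lemma meas_Kk (σ : ℝ) (hA : Measurable (Function.uncurry A))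
    (hB : Measurable (Function.uncurry B)) :
    Measurable (fun p : ℝ × E2 => Kk σ A B p.1 p.2) :=
  Measurable.lintegral_prod_right (f := fun (p : ℝ × E2) (η : E2) => Gg σ A B p.1 p.2 η)
    (meas_Gg σ hA hB)

attribute [irreducible] Kk

lemma meas_set : MeasurableSet {q : ℝ × ℝ | 0 < q.2 ∧ q.2 ≤ q.1} :=
  (measurableSet_lt measurable_const measurable_snd).inter
    (measurableSet_le measurable_snd measurable_fst)

set_option maxHeartbeats 1000000 in
lemma meas_Hh (σ : ℝ) (hA : Measurable (Function.uncurry A))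
    (hB : Measurable (Function.uncurry B)) :
    Measurable fun p : (ℝ × ℝ) × E2 => Hh σ A B p.1.1 p.1.2 p.2 := by
  unfold Hh
  have h1 : Measurable fun p : (ℝ × ℝ) × E2 =>
      Set.indicator {q : ℝ × ℝ | 0 < q.2 ∧ q.2 ≤ q.1} (1 : ℝ × ℝ → ℝ≥0∞) (p.1.1, p.1.2) :=
    (measurable_one.indicator meas_set).comp measurable_fst
  have hg : Measurable fun p : (ℝ × ℝ) × E2 => ((p.1.2, p.2) : ℝ × E2) := by fun_prop
  have h2 : Measurable fun p : (ℝ × ℝ) × E2 => Kk σ A B p.1.2 p.2 :=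
    (meas_Kk σ hA hB).comp hg
  have h3 : Measurable fun p : (ℝ × ℝ) × E2 =>
      EE p.1.1 p.1.2 p.2 * ((2 : ℝ≥0∞) ^ (σ + 1) * Kk σ A B p.1.2 p.2) :=
    meas_EE.mul (measurable_const.mul h2)
  exact h1.mul h3


section Step1
open ENNReal

lemma step1 (σ : ℝ) (hσ : -1 ≤ σ) (A B : ℝ → E2 → ℂ) (t z : ℝ) (ξ : E2) :
    ENNReal.ofReal (‖ξ‖ ^ (σ + 1)) *
      (ENNReal.ofReal (Real.exp (-((t - z) * ‖ξ‖))) * (‖QGB A B z ξ‖₊ : ℝ≥0∞))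
      ≤ EE t z ξ * ((2 : ℝ≥0∞) ^ (σ + 1) * Kk σ A B z ξ) := by
  set e := Real.exp (-((t - z) * ‖ξ‖)) with he'
  have he : 0 ≤ e := Real.exp_nonneg _
  have hw : 0 ≤ ‖ξ‖ ^ (σ + 1) := Real.rpow_nonneg (norm_nonneg ξ) _
  have hQ : (‖QGB A B z ξ‖₊ : ℝ≥0∞) ≤
      ∫⁻ η, ENNReal.ofReal |mk ξ η| * ((‖A z η‖₊ : ℝ≥0∞) * (‖B z (ξ - η)‖₊ : ℝ≥0∞)) := by
    rw [QGB]
    refine (enorm_integral_le_lintegral_enorm _).trans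
      (le_of_eq (lintegral_congr fun η => ?_))
    rw [enorm_eq_nnnorm, nnnorm_mul, nnnorm_mul, ENNReal.coe_mul, ENNReal.coe_mul, Complex.nnnorm_real,
      ← enorm_eq_nnnorm ((ξ 0 * η 1 - ξ 1 * η 0) / ‖η‖), Real.enorm_eq_ofReal_abs, mul_assoc]
    rfl
  have hcore : ∀ η : E2,
      (ENNReal.ofReal (‖ξ‖ ^ (σ + 1)) * ENNReal.ofReal e) *
        (ENNReal.ofReal |mk ξ η| * ((‖A z η‖₊ : ℝ≥0∞) * (‖B z (ξ - η)‖₊ : ℝ≥0∞))) ≤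
      EE t z ξ * ((2 : ℝ≥0∞) ^ (σ + 1) * Gg σ A B z ξ η) := by
    intro η
    have hstep : ENNReal.ofReal (‖ξ‖ ^ (σ + 1)) * ENNReal.ofReal e *
        ENNReal.ofReal |mk ξ η| ≤
        EE t z ξ * ((2 : ℝ≥0∞) ^ (σ + 1) *
          (ENNReal.ofReal (‖η‖ ^ (σ + 1)) + ENNReal.ofReal (‖ξ - η‖ ^ (σ + 1)))) := by
      have h2 : ((2 : ℝ≥0∞) ^ (σ + 1)) = ENNReal.ofReal ((2:ℝ) ^ (σ + 1)) := by
        rw [← ENNReal.ofReal_rpow_of_pos (by norm_num : (0:ℝ) < 2)]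
        norm_num
      rw [h2]
      unfold EE
      rw [← ENNReal.ofReal_mul hw, ← ENNReal.ofReal_mul (mul_nonneg hw he),
        ← ENNReal.ofReal_add (Real.rpow_nonneg (norm_nonneg η) _)
          (Real.rpow_nonneg (norm_nonneg _) _),
        ← ENNReal.ofReal_mul (Real.rpow_nonneg (by norm_num) _),
        ← ENNReal.ofReal_mul (mul_nonneg (norm_nonneg ξ) he)]
      apply ENNReal.ofReal_le_ofReal
      have hk := key_real σ hσ ξ η
      calc ‖ξ‖ ^ (σ + 1) * e * |mk ξ η| = (‖ξ‖ ^ (σ + 1) * |mk ξ η|) * e := by ring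
        _ ≤ (2 ^ (σ + 1) * (‖η‖ ^ (σ + 1) + ‖ξ - η‖ ^ (σ + 1)) * ‖ξ‖) * e :=
          mul_le_mul_of_nonneg_right hk he
        _ = ‖ξ‖ * e * (2 ^ (σ + 1) * (‖η‖ ^ (σ + 1) + ‖ξ - η‖ ^ (σ + 1))) := by ring
    calc (ENNReal.ofReal (‖ξ‖ ^ (σ + 1)) * ENNReal.ofReal e) *
          (ENNReal.ofReal |mk ξ η| * ((‖A z η‖₊ : ℝ≥0∞) * (‖B z (ξ - η)‖₊ : ℝ≥0∞)))
        = (ENNReal.ofReal (‖ξ‖ ^ (σ + 1)) * ENNReal.ofReal e * ENNReal.ofReal |mk ξ η|) *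
          ((‖A z η‖₊ : ℝ≥0∞) * (‖B z (ξ - η)‖₊ : ℝ≥0∞)) := by ring
      _ ≤ (EE t z ξ * ((2 : ℝ≥0∞) ^ (σ + 1) *
            (ENNReal.ofReal (‖η‖ ^ (σ + 1)) + ENNReal.ofReal (‖ξ - η‖ ^ (σ + 1))))) *
          ((‖A z η‖₊ : ℝ≥0∞) * (‖B z (ξ - η)‖₊ : ℝ≥0∞)) := mul_le_mul_left hstep _
      _ = EE t z ξ * ((2 : ℝ≥0∞) ^ (σ + 1) * Gg σ A B z ξ η) := by unfold Gg; ring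
  have hfin : (0:ℝ≥0∞) ≠ ⊤ := by simp
  calc ENNReal.ofReal (‖ξ‖ ^ (σ + 1)) * (ENNReal.ofReal e * (‖QGB A B z ξ‖₊ : ℝ≥0∞))
      = (ENNReal.ofReal (‖ξ‖ ^ (σ + 1)) * ENNReal.ofReal e) * (‖QGB A B z ξ‖₊ : ℝ≥0∞) := by
        rw [mul_assoc]
    _ ≤ (ENNReal.ofReal (‖ξ‖ ^ (σ + 1)) * ENNReal.ofReal e) *
        ∫⁻ η, ENNReal.ofReal |mk ξ η| * ((‖A z η‖₊ : ℝ≥0∞) * (‖B z (ξ - η)‖₊ : ℝ≥0∞)) :=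
        mul_le_mul_right hQ _
    _ = ∫⁻ η, (ENNReal.ofReal (‖ξ‖ ^ (σ + 1)) * ENNReal.ofReal e) *
        (ENNReal.ofReal |mk ξ η| * ((‖A z η‖₊ : ℝ≥0∞) * (‖B z (ξ - η)‖₊ : ℝ≥0∞))) :=
        (lintegral_const_mul' _ _
          (ENNReal.mul_ne_top ENNReal.ofReal_ne_top ENNReal.ofReal_ne_top)).symm
    _ ≤ ∫⁻ η, EE t z ξ * ((2 : ℝ≥0∞) ^ (σ + 1) * Gg σ A B z ξ η) := lintegral_mono hcore
    _ = ∫⁻ η, (EE t z ξ * (2 : ℝ≥0∞) ^ (σ + 1)) * Gg σ A B z ξ η :=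
        lintegral_congr fun η => by ring
    _ = (EE t z ξ * (2 : ℝ≥0∞) ^ (σ + 1)) * ∫⁻ η, Gg σ A B z ξ η :=
        lintegral_const_mul' _ _ (ENNReal.mul_ne_top ENNReal.ofReal_ne_top
          (ENNReal.rpow_ne_top_of_nonneg (by linarith) (by norm_num)))
    _ = EE t z ξ * ((2 : ℝ≥0∞) ^ (σ + 1) * Kk σ A B z ξ) := by
        rw [Kk_def, mul_assoc]

end Step1

lemma EE_int_le (z : ℝ) (ξ : E2) : (∫⁻ t in Set.Ici z, EE t z ξ) ≤ 1 := by
  unfold EE; exact exp_int_le z ‖ξ‖ (norm_nonneg ξ)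

lemma meas_EEt (z : ℝ) (ξ : E2) : Measurable fun t : ℝ => EE t z ξ := by
  unfold EE; fun_prop

lemma meas_Xnorm (σ' : ℝ) {C : ℝ → E2 → ℂ} (hC : Measurable (Function.uncurry C)) :
    Measurable fun z => Xnorm σ' (C z) := by
  unfold Xnorm
  have h1 : Measurable fun p : ℝ × E2 =>
      ENNReal.ofReal (‖p.2‖ ^ σ') * (‖C p.1 p.2‖₊ : ℝ≥0∞) :=
    (by fun_prop : Measurable fun p : ℝ × E2 => ENNReal.ofReal (‖p.2‖ ^ σ')).mul hC.nnnorm.coe_nnreal_ennreal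
  exact Measurable.lintegral_prod_right
    (f := fun (z : ℝ) (η : E2) => ENNReal.ofReal (‖η‖ ^ σ') * (‖C z η‖₊ : ℝ≥0∞)) h1

end BDIB


set_option maxHeartbeats 1000000 in
/-- Lemma 2.7, `L¹_T(X^{σ+1})` part: bound for the bilinear Duhamel term
`Q(t,ξ) = ∫₀^t e^{-(t-z)|ξ|} N[A,B](z,ξ) dz`. -/
theorem bilinear_duhamel_int_bound (σ : ℝ) (hσ : -1 ≤ σ) (T : ℝ) (hT : 0 < T)
    (A B : ℝ → E2 → ℂ)
    (hA : Measurable (Function.uncurry A)) (hB : Measurable (Function.uncurry B))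
    (hA0 : (⨆ t ∈ Set.Icc (0:ℝ) T, Xnorm 0 (A t)) < ⊤)
    (hB0 : (⨆ t ∈ Set.Icc (0:ℝ) T, Xnorm 0 (B t)) < ⊤)
    (hA1 : (∫⁻ t in Set.Icc (0:ℝ) T, Xnorm (σ + 1) (A t)) < ⊤)
    (hB1 : (∫⁻ t in Set.Icc (0:ℝ) T, Xnorm (σ + 1) (B t)) < ⊤) :
    (∫⁻ t in Set.Icc (0:ℝ) T, ∫⁻ ξ : E2, ENNReal.ofReal (‖ξ‖ ^ (σ + 1)) *
        ‖∫ z in (0:ℝ)..t, ((Real.exp (-((t - z) * ‖ξ‖)) : ℝ) : ℂ) * QGB A B z ξ‖₊)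
      ≤ (2 : ℝ≥0∞) ^ (σ + 1) *
        ((⨆ t ∈ Set.Icc (0:ℝ) T, Xnorm 0 (A t)) *
            (∫⁻ t in Set.Icc (0:ℝ) T, Xnorm (σ + 1) (B t)) +
          (∫⁻ t in Set.Icc (0:ℝ) T, Xnorm (σ + 1) (A t)) *
            (⨆ t ∈ Set.Icc (0:ℝ) T, Xnorm 0 (B t))) := by
  have hs1 : (0:ℝ) ≤ σ + 1 := by linarith
  have hc2 : ((2:ℝ≥0∞) ^ (σ + 1)) ≠ ⊤ :=
    ENNReal.rpow_ne_top_of_nonneg hs1 (by norm_num)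
  have mG := BDIB.meas_Gg (A := A) (B := B) σ hA hB
  have mK := BDIB.meas_Kk (A := A) (B := B) σ hA hB
  have mH := BDIB.meas_Hh (A := A) (B := B) σ hA hB
  have hAz : ∀ z : ℝ, Measurable (A z) := fun z => hA.comp measurable_prodMk_left
  have hBz : ∀ z : ℝ, Measurable (B z) := fun z => hB.comp measurable_prodMk_left
  -- Step I
  have stepI : (∫⁻ t in Set.Icc (0:ℝ) T, ∫⁻ ξ : E2, ENNReal.ofReal (‖ξ‖ ^ (σ + 1)) *
        ‖∫ z in (0:ℝ)..t, ((Real.exp (-((t - z) * ‖ξ‖)) : ℝ) : ℂ) * QGB A B z ξ‖₊)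
      ≤ ∫⁻ t in Set.Icc (0:ℝ) T, ∫⁻ ξ : E2, ∫⁻ z in Set.Ioc (0:ℝ) T,
          BDIB.Hh σ A B t z ξ := by
    refine lintegral_mono_ae (ae_restrict_of_forall_mem measurableSet_Icc fun t ht => ?_)
    refine lintegral_mono fun ξ => ?_
    rw [intervalIntegral.integral_of_le ht.1]
    have hbound : ∀ z : ℝ, ENNReal.ofReal (‖ξ‖ ^ (σ + 1)) *
        (‖((Real.exp (-((t - z) * ‖ξ‖)) : ℝ) : ℂ) * QGB A B z ξ‖₊ : ℝ≥0∞)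
        ≤ BDIB.EE t z ξ * ((2:ℝ≥0∞) ^ (σ + 1) * BDIB.Kk σ A B z ξ) := by
      intro z
      have hnn : (‖((Real.exp (-((t - z) * ‖ξ‖)) : ℝ) : ℂ) * QGB A B z ξ‖₊ : ℝ≥0∞)
          = ENNReal.ofReal (Real.exp (-((t - z) * ‖ξ‖))) * (‖QGB A B z ξ‖₊ : ℝ≥0∞) := by
        rw [nnnorm_mul, ENNReal.coe_mul, Complex.nnnorm_real,
          ← enorm_eq_nnnorm (Real.exp (-((t - z) * ‖ξ‖))), Real.enorm_eq_ofReal_abs, abs_of_nonneg (Real.exp_nonneg _)]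
      rw [hnn]
      exact BDIB.step1 σ hσ A B t z ξ
    have heq : (∫⁻ z in Set.Ioc (0:ℝ) T, BDIB.Hh σ A B t z ξ)
        = ∫⁻ z in Set.Ioc (0:ℝ) t,
            BDIB.EE t z ξ * ((2:ℝ≥0∞)^(σ+1) * BDIB.Kk σ A B z ξ) := by
      have hpt : ∀ z : ℝ, BDIB.Hh σ A B t z ξ = (Set.Ioc (0:ℝ) t).indicator
          (fun z => BDIB.EE t z ξ * ((2:ℝ≥0∞)^(σ+1) * BDIB.Kk σ A B z ξ)) z := by
        intro z
        unfold BDIB.Hh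
        by_cases hz : z ∈ Set.Ioc (0:ℝ) t
        · rw [Set.indicator_of_mem hz,
            Set.indicator_of_mem (show ((t, z) : ℝ × ℝ) ∈
              {q : ℝ × ℝ | 0 < q.2 ∧ q.2 ≤ q.1} from ⟨hz.1, hz.2⟩)]
          simp
        · rw [Set.indicator_of_notMem hz,
            Set.indicator_of_notMem (show ((t, z) : ℝ × ℝ) ∉
              {q : ℝ × ℝ | 0 < q.2 ∧ q.2 ≤ q.1} by
                simpa [Set.mem_setOf_eq, Set.mem_Ioc] using hz)]
          simp
      rw [lintegral_congr hpt, lintegral_indicator measurableSet_Ioc,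
        Measure.restrict_restrict measurableSet_Ioc,
        Set.inter_eq_self_of_subset_left (Set.Ioc_subset_Ioc_right ht.2)]
    rw [heq]
    refine le_trans (mul_le_mul_right (enorm_integral_le_lintegral_enorm _) _) ?_
    rw [← lintegral_const_mul' _ _ ENNReal.ofReal_ne_top]
    exact lintegral_mono fun z => hbound z
  -- Step II : swaps and time-kernel bound
  have swap1 : ∀ t : ℝ, (∫⁻ ξ : E2, ∫⁻ z in Set.Ioc (0:ℝ) T, BDIB.Hh σ A B t z ξ)
      = ∫⁻ z in Set.Ioc (0:ℝ) T, ∫⁻ ξ : E2, BDIB.Hh σ A B t z ξ := by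
    intro t
    exact lintegral_lintegral_swap ((mH.comp (by fun_prop :
      Measurable fun q : E2 × ℝ => (((t, q.2), q.1) : (ℝ × ℝ) × E2))).aemeasurable)
  have swap2 : (∫⁻ t in Set.Icc (0:ℝ) T, ∫⁻ z in Set.Ioc (0:ℝ) T,
        ∫⁻ ξ : E2, BDIB.Hh σ A B t z ξ)
      = ∫⁻ z in Set.Ioc (0:ℝ) T, ∫⁻ t in Set.Icc (0:ℝ) T,
        ∫⁻ ξ : E2, BDIB.Hh σ A B t z ξ := by
    refine lintegral_lintegral_swap ?_
    exact (Measurable.lintegral_prod_right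
      (f := fun (q : ℝ × ℝ) (ξ : E2) => BDIB.Hh σ A B q.1 q.2 ξ) mH).aemeasurable
  have swap3 : ∀ z : ℝ, (∫⁻ t in Set.Icc (0:ℝ) T, ∫⁻ ξ : E2, BDIB.Hh σ A B t z ξ)
      = ∫⁻ ξ : E2, ∫⁻ t in Set.Icc (0:ℝ) T, BDIB.Hh σ A B t z ξ := by
    intro z
    exact lintegral_lintegral_swap ((mH.comp (by fun_prop :
      Measurable fun q : ℝ × E2 => (((q.1, z), q.2) : (ℝ × ℝ) × E2))).aemeasurable)
  have hinner : ∀ (z : ℝ) (ξ : E2), (∫⁻ t in Set.Icc (0:ℝ) T, BDIB.Hh σ A B t z ξ)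
      ≤ (2:ℝ≥0∞)^(σ+1) * BDIB.Kk σ A B z ξ := by
    intro z ξ
    have hmono : ∀ t : ℝ, BDIB.Hh σ A B t z ξ ≤
        (Set.Ici z).indicator (fun t => BDIB.EE t z ξ) t *
          ((2:ℝ≥0∞)^(σ+1) * BDIB.Kk σ A B z ξ) := by
      intro t
      unfold BDIB.Hh
      by_cases h : ((t, z) : ℝ × ℝ) ∈ {q : ℝ × ℝ | 0 < q.2 ∧ q.2 ≤ q.1}
      · rw [Set.indicator_of_mem h, Set.indicator_of_mem (Set.mem_Ici.mpr h.2)]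
        simp
      · rw [Set.indicator_of_notMem h, zero_mul]
        exact zero_le
    calc (∫⁻ t in Set.Icc (0:ℝ) T, BDIB.Hh σ A B t z ξ)
        ≤ ∫⁻ t in Set.Icc (0:ℝ) T, (Set.Ici z).indicator (fun t => BDIB.EE t z ξ) t *
            ((2:ℝ≥0∞)^(σ+1) * BDIB.Kk σ A B z ξ) := lintegral_mono hmono
      _ ≤ ∫⁻ t : ℝ, (Set.Ici z).indicator (fun t => BDIB.EE t z ξ) t *
            ((2:ℝ≥0∞)^(σ+1) * BDIB.Kk σ A B z ξ) := setLIntegral_le_lintegral _ _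
      _ = (∫⁻ t : ℝ, (Set.Ici z).indicator (fun t => BDIB.EE t z ξ) t) *
            ((2:ℝ≥0∞)^(σ+1) * BDIB.Kk σ A B z ξ) :=
          lintegral_mul_const _ ((BDIB.meas_EEt z ξ).indicator measurableSet_Ici)
      _ = (∫⁻ t in Set.Ici z, BDIB.EE t z ξ) *
            ((2:ℝ≥0∞)^(σ+1) * BDIB.Kk σ A B z ξ) := by
          rw [lintegral_indicator measurableSet_Ici]
      _ ≤ 1 * ((2:ℝ≥0∞)^(σ+1) * BDIB.Kk σ A B z ξ) :=
          mul_le_mul_left (BDIB.EE_int_le z ξ) _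
      _ = (2:ℝ≥0∞)^(σ+1) * BDIB.Kk σ A B z ξ := one_mul _
  have stepII : (∫⁻ t in Set.Icc (0:ℝ) T, ∫⁻ ξ : E2, ∫⁻ z in Set.Ioc (0:ℝ) T,
        BDIB.Hh σ A B t z ξ)
      ≤ (2:ℝ≥0∞)^(σ+1) * ∫⁻ z in Set.Icc (0:ℝ) T, ∫⁻ ξ : E2, BDIB.Kk σ A B z ξ := by
    calc (∫⁻ t in Set.Icc (0:ℝ) T, ∫⁻ ξ : E2, ∫⁻ z in Set.Ioc (0:ℝ) T, BDIB.Hh σ A B t z ξ)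
        = ∫⁻ t in Set.Icc (0:ℝ) T, ∫⁻ z in Set.Ioc (0:ℝ) T, ∫⁻ ξ : E2,
            BDIB.Hh σ A B t z ξ := lintegral_congr fun t => swap1 t
      _ = ∫⁻ z in Set.Ioc (0:ℝ) T, ∫⁻ t in Set.Icc (0:ℝ) T, ∫⁻ ξ : E2,
            BDIB.Hh σ A B t z ξ := swap2
      _ = ∫⁻ z in Set.Ioc (0:ℝ) T, ∫⁻ ξ : E2, ∫⁻ t in Set.Icc (0:ℝ) T,
            BDIB.Hh σ A B t z ξ := lintegral_congr fun z => swap3 z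
      _ ≤ ∫⁻ z in Set.Ioc (0:ℝ) T, ∫⁻ ξ : E2, (2:ℝ≥0∞)^(σ+1) * BDIB.Kk σ A B z ξ :=
          lintegral_mono fun z => lintegral_mono fun ξ => hinner z ξ
      _ = ∫⁻ z in Set.Ioc (0:ℝ) T, (2:ℝ≥0∞)^(σ+1) * ∫⁻ ξ : E2, BDIB.Kk σ A B z ξ :=
          lintegral_congr fun z => lintegral_const_mul' _ _ hc2
      _ = (2:ℝ≥0∞)^(σ+1) * ∫⁻ z in Set.Ioc (0:ℝ) T, ∫⁻ ξ : E2, BDIB.Kk σ A B z ξ :=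
          lintegral_const_mul' _ _ hc2
      _ ≤ (2:ℝ≥0∞)^(σ+1) * ∫⁻ z in Set.Icc (0:ℝ) T, ∫⁻ ξ : E2, BDIB.Kk σ A B z ξ :=
          mul_le_mul_right (lintegral_mono'
            (Measure.restrict_mono Set.Ioc_subset_Icc_self le_rfl) (le_refl _)) _
  -- Step III : per-slice identity
  have hXzero : ∀ g : E2 → ℂ, Xnorm 0 g = ∫⁻ ζ : E2, (‖g ζ‖₊ : ℝ≥0∞) := by
    intro g; unfold Xnorm
    exact lintegral_congr fun ζ => by simp [Real.rpow_zero]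
  have stepIII : ∀ z : ℝ, (∫⁻ ξ : E2, BDIB.Kk σ A B z ξ)
      = Xnorm (σ+1) (A z) * Xnorm 0 (B z) + Xnorm 0 (A z) * Xnorm (σ+1) (B z) := by
    intro z
    have sw4 : (∫⁻ ξ : E2, BDIB.Kk σ A B z ξ)
        = ∫⁻ η : E2, ∫⁻ ξ : E2, BDIB.Gg σ A B z ξ η := by
      rw [lintegral_congr (fun ξ => BDIB.Kk_def σ A B z ξ)]
      exact lintegral_lintegral_swap ((mG.comp (by fun_prop :
        Measurable fun q : E2 × E2 => (((z, q.1), q.2) : (ℝ × E2) × E2))).aemeasurable)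
    rw [sw4]
    have hinner2 : ∀ η : E2, (∫⁻ ξ : E2, BDIB.Gg σ A B z ξ η)
        = ENNReal.ofReal (‖η‖^(σ+1)) * (‖A z η‖₊ : ℝ≥0∞) * Xnorm 0 (B z)
          + (‖A z η‖₊ : ℝ≥0∞) * Xnorm (σ+1) (B z) := by
      intro η
      have htrans : (∫⁻ ξ : E2, BDIB.Gg σ A B z ξ η)
          = ∫⁻ ζ : E2, (ENNReal.ofReal (‖η‖^(σ+1)) + ENNReal.ofReal (‖ζ‖^(σ+1))) *
              ((‖A z η‖₊ : ℝ≥0∞) * (‖B z ζ‖₊ : ℝ≥0∞)) := by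
        have hpt : ∀ ξ : E2, BDIB.Gg σ A B z ξ η = (fun ζ : E2 =>
            (ENNReal.ofReal (‖η‖^(σ+1)) + ENNReal.ofReal (‖ζ‖^(σ+1))) *
              ((‖A z η‖₊ : ℝ≥0∞) * (‖B z ζ‖₊ : ℝ≥0∞))) (ξ + -η) := by
          intro ξ; unfold BDIB.Gg; rw [sub_eq_add_neg]
        rw [lintegral_congr hpt]
        exact lintegral_add_right_eq_self (fun ζ : E2 =>
          (ENNReal.ofReal (‖η‖^(σ+1)) + ENNReal.ofReal (‖ζ‖^(σ+1))) *
            ((‖A z η‖₊ : ℝ≥0∞) * (‖B z ζ‖₊ : ℝ≥0∞))) (-η)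
      rw [htrans]
      have hexp : ∀ ζ : E2, (ENNReal.ofReal (‖η‖^(σ+1)) + ENNReal.ofReal (‖ζ‖^(σ+1))) *
          ((‖A z η‖₊ : ℝ≥0∞) * (‖B z ζ‖₊ : ℝ≥0∞))
          = (ENNReal.ofReal (‖η‖^(σ+1)) * (‖A z η‖₊ : ℝ≥0∞)) * (‖B z ζ‖₊ : ℝ≥0∞)
            + (‖A z η‖₊ : ℝ≥0∞) * (ENNReal.ofReal (‖ζ‖^(σ+1)) * (‖B z ζ‖₊ : ℝ≥0∞)) :=
        fun ζ => by ring
      rw [lintegral_congr hexp,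
        lintegral_add_left (f := fun ζ : E2 => ENNReal.ofReal (‖η‖^(σ+1)) * (‖A z η‖₊ : ℝ≥0∞) *
          (‖B z ζ‖₊ : ℝ≥0∞)) (measurable_const.mul (hBz z).nnnorm.coe_nnreal_ennreal),
        lintegral_const_mul' _ _ (ENNReal.mul_ne_top ENNReal.ofReal_ne_top ENNReal.coe_ne_top),
        lintegral_const_mul' _ _ ENNReal.coe_ne_top, ← hXzero (B z)]
      rfl
    rw [lintegral_congr hinner2,
      lintegral_add_left (f := fun η : E2 => ENNReal.ofReal (‖η‖^(σ+1)) * (‖A z η‖₊ : ℝ≥0∞) *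
        Xnorm 0 (B z)) (((by fun_prop : Measurable fun η : E2 =>
        ENNReal.ofReal (‖η‖^(σ+1))).mul (hAz z).nnnorm.coe_nnreal_ennreal).mul_const _),
      lintegral_mul_const _ (f := fun η : E2 => ENNReal.ofReal (‖η‖^(σ+1)) * (‖A z η‖₊ : ℝ≥0∞))
        ((by fun_prop : Measurable fun η : E2 =>
        ENNReal.ofReal (‖η‖^(σ+1))).mul (hAz z).nnnorm.coe_nnreal_ennreal),
      lintegral_mul_const _ (hAz z).nnnorm.coe_nnreal_ennreal, ← hXzero (A z)]
    rfl
  -- Step IV : final bound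
  have stepIV : (∫⁻ z in Set.Icc (0:ℝ) T,
      (Xnorm (σ+1) (A z) * Xnorm 0 (B z) + Xnorm 0 (A z) * Xnorm (σ+1) (B z)))
      ≤ (⨆ t ∈ Set.Icc (0:ℝ) T, Xnorm 0 (A t)) *
          (∫⁻ t in Set.Icc (0:ℝ) T, Xnorm (σ + 1) (B t)) +
        (∫⁻ t in Set.Icc (0:ℝ) T, Xnorm (σ + 1) (A t)) *
          (⨆ t ∈ Set.Icc (0:ℝ) T, Xnorm 0 (B t)) := by
    have hm1 : Measurable fun z => Xnorm (σ+1) (A z) := BDIB.meas_Xnorm (σ+1) hA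
    calc (∫⁻ z in Set.Icc (0:ℝ) T,
          (Xnorm (σ+1) (A z) * Xnorm 0 (B z) + Xnorm 0 (A z) * Xnorm (σ+1) (B z)))
        ≤ ∫⁻ z in Set.Icc (0:ℝ) T,
            (Xnorm (σ+1) (A z) * (⨆ t ∈ Set.Icc (0:ℝ) T, Xnorm 0 (B t)) +
             (⨆ t ∈ Set.Icc (0:ℝ) T, Xnorm 0 (A t)) * Xnorm (σ+1) (B z)) := by
          refine lintegral_mono_ae (ae_restrict_of_forall_mem measurableSet_Icc
            fun z hz => ?_)
          exact add_le_add
            (mul_le_mul_right (le_biSup (fun t => Xnorm 0 (B t)) hz) _)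
            (mul_le_mul_left (le_biSup (fun t => Xnorm 0 (A t)) hz) _)
      _ = (∫⁻ z in Set.Icc (0:ℝ) T, Xnorm (σ+1) (A z)) *
            (⨆ t ∈ Set.Icc (0:ℝ) T, Xnorm 0 (B t)) +
          (⨆ t ∈ Set.Icc (0:ℝ) T, Xnorm 0 (A t)) *
            (∫⁻ z in Set.Icc (0:ℝ) T, Xnorm (σ+1) (B z)) := by
          rw [lintegral_add_left (hm1.mul_const _),
            lintegral_mul_const' _ _ hB0.ne, lintegral_const_mul' _ _ hA0.ne]
      _ = (⨆ t ∈ Set.Icc (0:ℝ) T, Xnorm 0 (A t)) *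
            (∫⁻ t in Set.Icc (0:ℝ) T, Xnorm (σ + 1) (B t)) +
          (∫⁻ t in Set.Icc (0:ℝ) T, Xnorm (σ + 1) (A t)) *
            (⨆ t ∈ Set.Icc (0:ℝ) T, Xnorm 0 (B t)) := add_comm _ _
  -- assemble
  refine le_trans stepI (le_trans stepII ?_)
  rw [lintegral_congr fun z => stepIII z]
  exact mul_le_mul_right stepIV _

end
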